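/- Let F_q be a finite field, n a positive integer, and C_a, C_b, C_z nonzero F_q-linear subspaces of F_q^n with C_z ⊆ C_b ⊆ C_a, having minimum distances d_a, d_b, d_z respectively. Let α ∈ F_q with α ≠ 0 and α ≠ 1. Then for every (a, b, z) ∈ C_a × C_b × C_z with (a, b, z) ≠ (0, 0, 0), the Hamming weight of the concatenated vector (a | a+b | a+αb+z) ∈ F_q^{3n} satisfies wt(a) + wt(a+b) + wt(a+αb+z) ≥ min{3d_a, 2d_b, d_z}. In other words, the code C = {(a | a+b | a+αb+z) : a ∈ C_a, b ∈ C_b, z ∈ C_z} has minimum distance at least min{3d_a, 2d_b, d_z}. -/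

import Mathlib

/-- Concatenation `(u | v | w)` of three vectors of length `n` into a vector of length `3n`. -/
def cat3 {F : Type*} {n : ℕ} (u v w : Fin n → F) : Fin (n + n + n) → F :=
  Fin.append (Fin.append u v) w

/-- `d` is the minimum distance of the (nonzero) linear code `C`: it is the least element of
the set of Hamming weights of nonzero codewords of `C`. -/
def IsMinDist {F : Type*} [Field F] [DecidableEq F] {m : ℕ}
    (C : Submodule F (Fin m → F)) (d : ℕ) : Prop :=
  IsLeast {w : ℕ | ∃ c ∈ C, c ≠ 0 ∧ hammingNorm c = w} d

private lemma hn_add_le' {F : Type*} [DecidableEq F] [AddGroup F] {n : ℕ} (x y : Fin n → F) :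
    hammingNorm (x + y) ≤ hammingNorm x + hammingNorm y := by
  have := hammingDist_triangle (-x) 0 y
  simp only [hammingDist_eq_hammingNorm, neg_neg, add_zero, neg_zero, zero_add] at this
  exact this

private lemma two_mul_le' {F : Type*} [Field F] [DecidableEq F] {n : ℕ} (a b : Fin n → F)
    {α : F} (hα0 : α ≠ 0) (hα1 : α ≠ 1) :
    2 * hammingNorm b ≤
      hammingNorm a + hammingNorm (a + b) + hammingNorm (a + α • b) := by
  classical
  have h : ∀ x : Fin n → F, hammingNorm x = ∑ i, if x i ≠ 0 then 1 else 0 := by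
    intro x; simp [hammingNorm, Finset.card_filter]
  rw [h, h, h, h, ← Finset.sum_add_distrib, ← Finset.sum_add_distrib, Finset.mul_sum]
  apply Finset.sum_le_sum
  intro i _
  by_cases hb : b i = 0
  · simp [hb]
  simp only [Pi.add_apply, Pi.smul_apply, smul_eq_mul]
  by_cases ha : a i = 0
  · have h2 : a i + b i ≠ 0 := by simp [ha, hb]
    have h3 : a i + α * b i ≠ 0 := by simp [ha, hα0, hb]
    simp [hb, h2, h3]
  · by_cases h2 : a i + b i = 0
    · have h3 : a i + α * b i ≠ 0 := by
        intro h3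
        have : (α - 1) * b i = 0 := by linear_combination h3 - h2
        rcases mul_eq_zero.1 this with h | h
        · exact hα1 (sub_eq_zero.1 h)
        · exact hb h
      simp [hb, ha, h3]
    · simp [hb, ha, h2]

theorem stmt_1 (F : Type*) [Field F] [Fintype F] [DecidableEq F] (n : ℕ) (hn : 0 < n)
    (Ca Cb Cz : Submodule F (Fin n → F))
    (hCa : Ca ≠ ⊥) (hCb : Cb ≠ ⊥) (hCz : Cz ≠ ⊥)
    (hzb : Cz ≤ Cb) (hba : Cb ≤ Ca)
    (da db dz : ℕ) (hda : IsMinDist Ca da) (hdb : IsMinDist Cb db) (hdz : IsMinDist Cz dz)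
    (α : F) (hα0 : α ≠ 0) (hα1 : α ≠ 1) :
    ∀ a ∈ Ca, ∀ b ∈ Cb, ∀ z ∈ Cz, ¬(a = 0 ∧ b = 0 ∧ z = 0) →
      min (3 * da) (min (2 * db) dz) ≤
        hammingNorm a + hammingNorm (a + b) + hammingNorm (a + α • b + z) := by
  intro a ha b hb z hz hne
  by_cases hz0 : z = 0
  · by_cases hb0 : b = 0
    · -- a ≠ 0, all three are a
      have ha0 : a ≠ 0 := fun h => hne ⟨h, hb0, hz0⟩
      have hdle : da ≤ hammingNorm a := hda.2 ⟨a, ha, ha0, rfl⟩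
      subst hb0 hz0
      simp only [add_zero, smul_zero]
      refine le_trans (min_le_left _ _) ?_
      omega
    · -- b ≠ 0
      have hdle : db ≤ hammingNorm b := hdb.2 ⟨b, hb, hb0, rfl⟩
      subst hz0
      rw [add_zero]
      refine le_trans (min_le_of_right_le (min_le_left _ _)) ?_
      calc 2 * db ≤ 2 * hammingNorm b := by omega
        _ ≤ _ := two_mul_le' a b hα0 hα1
  · -- z ≠ 0
    have hdle : dz ≤ hammingNorm z := hdz.2 ⟨z, hz, hz0, rfl⟩
    refine le_trans (min_le_of_right_le (min_le_right _ _)) (le_trans hdle ?_)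
    have hzeq : z = (α - 1) • a + ((-α) • (a + b) + (a + α • b + z)) := by
      ext i; simp only [Pi.add_apply, Pi.smul_apply, smul_eq_mul]; ring
    calc hammingNorm z ≤ hammingNorm ((α - 1) • a) +
          hammingNorm ((-α) • (a + b) + (a + α • b + z)) := by
          conv_lhs => rw [hzeq]
          exact hn_add_le' ((α - 1) • a) ((-α) • (a + b) + (a + α • b + z))
      _ ≤ hammingNorm ((α - 1) • a) +
          (hammingNorm ((-α) • (a + b)) + hammingNorm (a + α • b + z)) := by
          exact Nat.add_le_add_left (hn_add_le' _ _) _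
      _ ≤ _ := by
          have h1 := hammingNorm_smul_le_hammingNorm (k := α - 1) (x := a)
          have h2 := hammingNorm_smul_le_hammingNorm (k := -α) (x := a + b)
          omega
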